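/- arXiv:1912.13402 — 3 statements merged into one kernel-verified Lean document; each statement's English description precedes it below -/
import Mathlib

section
/- Let x(t), ξ(t) solve x' = (|x|/|ξ|)·ξ, ξ' = −(|ξ|/|x|)·x with x(t), ξ(t) ≠ 0, and let c = ⟨x(0),ξ(0)⟩/(|x(0)|·|ξ(0)|). Then the unit vectors ω(t) = x(t)/|x(t)| and θ(t) = ξ(t)/|ξ(t)| satisfy the linear system ω' = −c·ω + θ and θ' = −ω + c·θ. -/
open scoped RealInnerProductSpace

private lemma norm_hasDerivAt {E : Type*} [NormedAddCommGroup E] [InnerProductSpace ℝ E]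
    {f : ℝ → E} {f' : E} {t : ℝ} (hf : HasDerivAt f f' t) (h0 : f t ≠ 0) :
    HasDerivAt (fun s => ‖f s‖) (⟪f t, f'⟫ / ‖f t‖) t := by
  have hsq : HasDerivAt (fun s => ⟪f s, f s⟫) (⟪f t, f'⟫ + ⟪f', f t⟫) t := hf.inner ℝ hf
  have hne : ⟪f t, f t⟫ ≠ 0 := by
    simpa [real_inner_self_eq_norm_mul_norm] using mul_ne_zero (norm_ne_zero_iff.2 h0) (norm_ne_zero_iff.2 h0)
  have h := (Real.hasDerivAt_sqrt hne).comp t hsq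
  have heq : (fun s => Real.sqrt ⟪f s, f s⟫) = fun s => ‖f s‖ := by
    funext s
    rw [real_inner_self_eq_norm_mul_norm, Real.sqrt_mul_self (norm_nonneg _)]
  rw [show ((fun x => Real.sqrt x) ∘ fun s => ⟪f s, f s⟫) = fun s => ‖f s‖ from heq] at h
  refine h.congr_deriv (Eq.symm ?_)
  rw [real_inner_self_eq_norm_mul_norm, Real.sqrt_mul_self (norm_nonneg _),
    real_inner_comm f' (f t)]
  have : ‖f t‖ ≠ 0 := norm_ne_zero_iff.2 h0
  field_simp
  ring

/-- Along the Hamiltonian flow of `p(x,ξ)=|x||ξ|`, the unit vectors `ω = x/|x|`, `θ = ξ/|ξ|`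
solve the linear system `ω' = -cω + θ`, `θ' = -ω + cθ` with
`c = ⟨x(0),ξ(0)⟩/(|x(0)||ξ(0)|)`. -/
theorem stmt2 (d : ℕ) (x ξ : ℝ → EuclideanSpace ℝ (Fin d))
    (hx0 : ∀ t, x t ≠ 0) (hξ0 : ∀ t, ξ t ≠ 0)
    (hx : ∀ t, HasDerivAt x ((‖x t‖ / ‖ξ t‖) • ξ t) t)
    (hξ : ∀ t, HasDerivAt ξ (-((‖ξ t‖ / ‖x t‖) • x t)) t)
    (c : ℝ) (hc : c = ⟪x 0, ξ 0⟫ / (‖x 0‖ * ‖ξ 0‖))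
    (ω θ : ℝ → EuclideanSpace ℝ (Fin d))
    (hω : ω = fun t => ‖x t‖⁻¹ • x t) (hθ : θ = fun t => ‖ξ t‖⁻¹ • ξ t) :
    (∀ t, HasDerivAt ω (-c • ω t + θ t) t) ∧
    (∀ t, HasDerivAt θ (-ω t + c • θ t) t) := by
  subst hc hω hθ
  have hxn : ∀ t, ‖x t‖ ≠ 0 := fun t => norm_ne_zero_iff.2 (hx0 t)
  have hξn : ∀ t, ‖ξ t‖ ≠ 0 := fun t => norm_ne_zero_iff.2 (hξ0 t)
  -- ⟪x,ξ⟫ is constant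
  have hK : ∀ t, HasDerivAt (fun s => ⟪x s, ξ s⟫) 0 t := by
    intro t
    have h := (hx t).inner ℝ (hξ t)
    refine h.congr_deriv (Eq.symm ?_)
    rw [inner_neg_right, real_inner_smul_right, real_inner_smul_left,
      real_inner_self_eq_norm_mul_norm, real_inner_self_eq_norm_mul_norm]
    field_simp [hxn t, hξn t]
    ring
  have hKc : ∀ t, ⟪x t, ξ t⟫ = ⟪x 0, ξ 0⟫ :=
    fun t => is_const_of_deriv_eq_zero (fun s => (hK s).differentiableAt)
      (fun s => (hK s).deriv) t 0
  -- derivatives of the norms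
  have hn : ∀ t, HasDerivAt (fun s => ‖x s‖) (⟪x t, ξ t⟫ / ‖ξ t‖) t := by
    intro t
    have h := norm_hasDerivAt (hx t) (hx0 t)
    refine h.congr_deriv (Eq.symm ?_)
    rw [real_inner_smul_right]
    field_simp [hxn t, hξn t]
  have hm : ∀ t, HasDerivAt (fun s => ‖ξ s‖) (-(⟪x t, ξ t⟫ / ‖x t‖)) t := by
    intro t
    have h := norm_hasDerivAt (hξ t) (hξ0 t)
    refine h.congr_deriv (Eq.symm ?_)
    rw [inner_neg_right, real_inner_smul_right, real_inner_comm]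
    field_simp [hxn t, hξn t]
  -- ‖x‖‖ξ‖ is constant
  have hP : ∀ t, HasDerivAt (fun s => ‖x s‖ * ‖ξ s‖) 0 t := by
    intro t
    have h := (hn t).mul (hm t)
    refine h.congr_deriv (Eq.symm ?_)
    field_simp [hxn t, hξn t]
    ring
  have hPc : ∀ t, ‖x t‖ * ‖ξ t‖ = ‖x 0‖ * ‖ξ 0‖ :=
    fun t => is_const_of_deriv_eq_zero (fun s => (hP s).differentiableAt)
      (fun s => (hP s).deriv) t 0
  constructor
  · intro t
    have h := ((hn t).inv (hxn t)).smul (hx t)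
    refine h.congr_deriv (Eq.symm ?_)
    match_scalars
    · rw [hKc t, ← hPc t]
      field_simp
    · change _ = ‖x t‖⁻¹ * _
      field_simp [hxn t, hξn t]
  · intro t
    have h := ((hm t).inv (hξn t)).smul (hξ t)
    refine h.congr_deriv (Eq.symm ?_)
    match_scalars
    · change _ = ‖ξ t‖⁻¹ * _
      field_simp [hxn t, hξn t]
    · rw [hKc t, ← hPc t]
      field_simp
end

section
/- Let ω₀, θ₀ ∈ S^{d−1} with ⟨ω₀,θ₀⟩² ≠ 1 and set c = ⟨ω₀,θ₀⟩. Then the solution (ω(t), θ(t)) of ω' = −cω + θ, θ' = −ω + cθ with initial data (ω₀, θ₀) satisfies (ω(T), θ(T)) = (ω₀, θ₀) for T = 2π/√(1−c²), and no smaller T > 0 has this property. -/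
open scoped RealInnerProductSpace

private lemma hasDerivAt_cos_mul (s t : ℝ) :
    HasDerivAt (fun u => Real.cos (s * u)) (-(s * Real.sin (s * t))) t := by
  have h1 : HasDerivAt (fun u => s * u) s t := by
    simpa using (hasDerivAt_id t).const_mul s
  have := (Real.hasDerivAt_cos (s * t)).comp t h1
  exact HasDerivAt.congr_deriv this (Eq.symm (by ring))

private lemma hasDerivAt_sin_mul (s t : ℝ) :
    HasDerivAt (fun u => Real.sin (s * u)) (s * Real.cos (s * t)) t := by
  have h1 : HasDerivAt (fun u => s * u) s t := by
    simpa using (hasDerivAt_id t).const_mul s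
  have := (Real.hasDerivAt_sin (s * t)).comp t h1
  exact HasDerivAt.congr_deriv this (Eq.symm (by ring))

/-- Explicit solution of `x'' = -s² x`. -/
private lemma osc {E : Type*} [NormedAddCommGroup E] [NormedSpace ℝ E]
    (s : ℝ) (hs : s ≠ 0) (x v : ℝ → E)
    (hx : ∀ t, HasDerivAt x (v t) t)
    (hv : ∀ t, HasDerivAt v (-(s ^ 2) • x t) t) (t : ℝ) :
    x t = Real.cos (s * t) • x 0 + (Real.sin (s * t) / s) • v 0 := by
  set g : ℝ → E := fun u => Real.cos (s * u) • x u - (Real.sin (s * u) / s) • v u with hg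
  set h : ℝ → E := fun u => (s * Real.sin (s * u)) • x u + Real.cos (s * u) • v u with hh
  have hg' : ∀ u, HasDerivAt g 0 u := by
    intro u
    have d1 := ((hasDerivAt_cos_mul s u).smul (hx u)).sub
      (((hasDerivAt_sin_mul s u).div_const s).smul (hv u))
    refine HasDerivAt.congr_deriv d1 (Eq.symm ?_)
    match_scalars <;> field_simp <;> ring
  have hh' : ∀ u, HasDerivAt h 0 u := by
    intro u
    have d1 := (((hasDerivAt_sin_mul s u).const_mul s).smul (hx u)).add
      ((hasDerivAt_cos_mul s u).smul (hv u))
    refine HasDerivAt.congr_deriv d1 (Eq.symm ?_)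
    match_scalars <;> ring
  have hgc : g t = g 0 := by
    apply is_const_of_deriv_eq_zero (fun u => (hg' u).differentiableAt)
    intro u; exact (hg' u).deriv
  have hhc : h t = h 0 := by
    apply is_const_of_deriv_eq_zero (fun u => (hh' u).differentiableAt)
    intro u; exact (hh' u).deriv
  have hg0 : g 0 = x 0 := by simp [hg]
  have hh0 : h 0 = v 0 := by simp [hh]
  have key : Real.cos (s * t) • g t + (Real.sin (s * t) / s) • h t = x t := by
    simp only [hg, hh]
    match_scalars
    · field_simp
      linear_combination Real.sin_sq_add_cos_sq (s * t)
    · field_simp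
      nlinarith [Real.sin_sq_add_cos_sq (s * t)]
  rw [hgc, hhc, hg0, hh0] at key
  exact key.symm

/-- For `ω₀, θ₀` on the unit sphere with `⟨ω₀,θ₀⟩² ≠ 1` and `c = ⟨ω₀,θ₀⟩`, the solution of
`ω' = -cω + θ`, `θ' = -ω + cθ` with data `(ω₀,θ₀)` returns to `(ω₀,θ₀)` exactly at time
`T = 2π/√(1-c²)`, and at no smaller positive time. -/
theorem stmt5 (d : ℕ) (ω₀ θ₀ : EuclideanSpace ℝ (Fin d))
    (hω₀ : ‖ω₀‖ = 1) (hθ₀ : ‖θ₀‖ = 1) (hangle : ⟪ω₀, θ₀⟫ ^ 2 ≠ 1)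
    (c : ℝ) (hc : c = ⟪ω₀, θ₀⟫)
    (ω θ : ℝ → EuclideanSpace ℝ (Fin d))
    (hω : ∀ t, HasDerivAt ω (-c • ω t + θ t) t)
    (hθ : ∀ t, HasDerivAt θ (-ω t + c • θ t) t)
    (hω0 : ω 0 = ω₀) (hθ0 : θ 0 = θ₀) :
    (ω (2 * Real.pi / Real.sqrt (1 - c ^ 2)) = ω₀ ∧
     θ (2 * Real.pi / Real.sqrt (1 - c ^ 2)) = θ₀) ∧
    (∀ T : ℝ, 0 < T → ω T = ω₀ → θ T = θ₀ →
      2 * Real.pi / Real.sqrt (1 - c ^ 2) ≤ T) := by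
  have hc2 : c ^ 2 < 1 := by
    have h1 : |⟪ω₀, θ₀⟫| ≤ ‖ω₀‖ * ‖θ₀‖ := abs_real_inner_le_norm ω₀ θ₀
    rw [hω₀, hθ₀] at h1
    have h2 : c ^ 2 ≤ 1 := by
      rw [hc]
      nlinarith [abs_nonneg ⟪ω₀, θ₀⟫, sq_abs ⟪ω₀, θ₀⟫]
    rcases lt_or_eq_of_le h2 with h | h
    · exact h
    · exact absurd (hc ▸ h) hangle
  set s : ℝ := Real.sqrt (1 - c ^ 2) with hsdef
  have hspos : 0 < s := Real.sqrt_pos.mpr (by linarith)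
  have hs : s ≠ 0 := ne_of_gt hspos
  have hs2 : s ^ 2 = 1 - c ^ 2 := Real.sq_sqrt (by linarith)
  -- the explicit solution formulas
  have hv : ∀ t, HasDerivAt (fun u => -c • ω u + θ u) (-(s ^ 2) • ω t) t := by
    intro t
    have h1 := ((hω t).const_smul (-c)).add (hθ t)
    refine HasDerivAt.congr_deriv h1 (Eq.symm ?_)
    match_scalars
    · linear_combination -hs2
    · ring
  have hw : ∀ t, HasDerivAt (fun u => -ω u + c • θ u) (-(s ^ 2) • θ t) t := by
    intro t
    have h1 := ((hω t).neg).add ((hθ t).const_smul c)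
    refine HasDerivAt.congr_deriv h1 (Eq.symm ?_)
    match_scalars <;> linarith [hs2]
  have hωt : ∀ t, ω t = Real.cos (s * t) • ω₀ +
      (Real.sin (s * t) / s) • (-c • ω₀ + θ₀) := by
    intro t
    have := osc s hs ω (fun u => -c • ω u + θ u) hω hv t
    simpa [hω0, hθ0] using this
  have hθt : ∀ t, θ t = Real.cos (s * t) • θ₀ +
      (Real.sin (s * t) / s) • (-ω₀ + c • θ₀) := by
    intro t
    have h1 : ∀ u, HasDerivAt θ ((fun u => -ω u + c • θ u) u) u := hθ
    have := osc s hs θ (fun u => -ω u + c • θ u) h1 hw t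
    simpa [hω0, hθ0] using this
  have hsT : s * (2 * Real.pi / s) = 2 * Real.pi := by field_simp
  constructor
  · constructor
    · rw [hωt, hsT, Real.cos_two_pi, Real.sin_two_pi]
      simp
    · rw [hθt, hsT, Real.cos_two_pi, Real.sin_two_pi]
      simp
  · intro T hT hωT _
    have hcos : Real.cos (s * T) = 1 := by
      have h := hωt T
      rw [hωT] at h
      have h2 := congrArg (fun z => ⟪ω₀, z⟫) h
      simp only [inner_add_right, real_inner_smul_right, inner_neg_right] at h2
      rw [real_inner_self_eq_norm_sq, hω₀, ← hc] at h2
      norm_num at h2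
      linarith [h2]
    obtain ⟨n, hn⟩ := Real.cos_eq_one_iff (s * T) |>.mp hcos
    have hπ : 0 < Real.pi := Real.pi_pos
    have hn1 : (1 : ℤ) ≤ n := by
      by_contra hle
      push_neg at hle
      have : (n : ℝ) ≤ 0 := by exact_mod_cast Int.lt_add_one_iff.mp hle
      nlinarith [mul_pos hspos hT]
    have h2π : 2 * Real.pi ≤ s * T := by
      have : (1 : ℝ) ≤ (n : ℝ) := by exact_mod_cast hn1
      nlinarith
    rw [div_le_iff₀ hspos]
    linarith [h2π, mul_comm s T]
end

section
/- For every integer d ≥ 1, lim_{τ→∞} [ ∫_{0}^{τ} (1+r²)^{−d/2} r^{d−1} dr − log τ ] = −(1/2)·(Ψ(d/2) + γ), where Ψ is the digamma function and γ is the Euler–Mascheroni constant. -/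
open Filter

/-- The digamma function `Ψ(z) = d/dz log Γ(z)`. -/
noncomputable def digamma (z : ℝ) : ℝ := deriv (fun x => Real.log (Real.Gamma x)) z

section Digamma

lemma hasDerivAt_logGamma {x : ℝ} (hx : 0 < x) :
    HasDerivAt (fun y => Real.log (Real.Gamma y)) (digamma x) x := by
  have hdiff : DifferentiableAt ℝ Real.Gamma x :=
    Real.differentiableAt_Gamma (fun m h => by
      rw [h] at hx; linarith [Nat.cast_nonneg (α:=ℝ) m])
  have h := hdiff.hasDerivAt.log (Real.Gamma_pos_of_pos hx).ne'
  have : digamma x = deriv Real.Gamma x / Real.Gamma x := h.deriv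
  rw [this]; exact h

lemma digamma_eq {x : ℝ} (hx : 0 < x) :
    digamma x = deriv Real.Gamma x / Real.Gamma x := by
  have hdiff : DifferentiableAt ℝ Real.Gamma x :=
    Real.differentiableAt_Gamma (fun m h => by
      rw [h] at hx; linarith [Nat.cast_nonneg (α:=ℝ) m])
  exact (hdiff.hasDerivAt.log (Real.Gamma_pos_of_pos hx).ne').deriv

lemma digamma_one : digamma 1 = -Real.eulerMascheroniConstant := by
  rw [digamma_eq one_pos, Real.hasDerivAt_Gamma_one.deriv, Real.Gamma_one, div_one]

lemma digamma_half : digamma (1/2) = -(Real.eulerMascheroniConstant + 2 * Real.log 2) := by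
  rw [digamma_eq (by norm_num), Real.hasDerivAt_Gamma_one_half.deriv, Real.Gamma_one_half_eq]
  rw [neg_mul, neg_div, mul_comm, mul_div_assoc, div_self (by positivity), mul_one]

lemma digamma_add_one {x : ℝ} (hx : 0 < x) :
    digamma (x + 1) = digamma x + 1 / x := by
  have h1 : HasDerivAt (fun y : ℝ => Real.log (Real.Gamma (y + 1))) (digamma (x + 1)) x := by
    have := (hasDerivAt_logGamma (by linarith : (0:ℝ) < x + 1)).comp x
      ((hasDerivAt_id x).add_const 1)
    exact this.congr_deriv (mul_one _)
  have h2 : HasDerivAt (fun y : ℝ => Real.log (Real.Gamma (y + 1)))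
      (digamma x + 1 / x) x := by
    have hx' : HasDerivAt (fun y : ℝ => Real.log (Real.Gamma y) + Real.log y)
        (digamma x + 1 / x) x := by
      exact ((hasDerivAt_logGamma hx).add (Real.hasDerivAt_log hx.ne')).congr_deriv (by rw [one_div])
    apply hx'.congr_of_eventuallyEq
    filter_upwards [eventually_gt_nhds hx] with y hy
    rw [Real.Gamma_add_one hy.ne', Real.log_mul hy.ne' (Real.Gamma_pos_of_pos hy).ne']
    ring
  exact h1.unique h2

end Digamma

section Integrals

open Real

noncomputable def ff (d : ℕ) (r : ℝ) : ℝ := (1 + r ^ 2) ^ (-(d : ℝ) / 2) * r ^ (d - 1)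

noncomputable def gg (d : ℕ) (r : ℝ) : ℝ := (1 + r ^ 2) ^ (-((d : ℝ) + 2) / 2) * r ^ (d - 1)

lemma continuous_ff (d : ℕ) : Continuous (ff d) := by
  apply Continuous.mul
  · apply Continuous.rpow_const (by continuity)
    intro r; left; positivity
  · exact continuous_pow _

lemma continuous_gg (d : ℕ) : Continuous (gg d) := by
  apply Continuous.mul
  · apply Continuous.rpow_const (by continuity)
    intro r; left; positivity
  · exact continuous_pow _

lemma base1 : Tendsto (fun τ : ℝ => (∫ r in (0:ℝ)..τ, ff 1 r) - Real.log τ)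
    atTop (nhds (Real.log 2)) := by
  have hint : ∀ τ : ℝ, (∫ r in (0:ℝ)..τ, ff 1 r) = Real.arsinh τ := by
    intro τ
    have : ∀ r : ℝ, HasDerivAt Real.arsinh (ff 1 r) r := by
      intro r
      have := Real.hasDerivAt_arsinh r
      convert this using 1
      simp only [ff]
      rw [show (-((1:ℕ):ℝ)/2) = -(1/2:ℝ) by norm_num,
        Real.rpow_neg (by positivity), ← Real.sqrt_eq_rpow]
      norm_num
    rw [intervalIntegral.integral_eq_sub_of_hasDerivAt (fun r _ => this r)
      ((continuous_ff 1).intervalIntegrable 0 τ)]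
    simp
  simp only [hint]
  have h1 : Tendsto (fun τ : ℝ => Real.log (1 + √(τ⁻¹ ^ 2 + 1))) atTop (nhds (Real.log 2)) := by
    have : Tendsto (fun τ : ℝ => 1 + √(τ⁻¹ ^ 2 + 1)) atTop (nhds 2) := by
      have h0 : Tendsto (fun τ : ℝ => τ⁻¹ ^ 2 + 1) atTop (nhds 1) := by
        have := (tendsto_inv_atTop_zero (𝕜 := ℝ)).pow 2
        simpa using this.add tendsto_const_nhds
      have := h0.sqrt.const_add 1
      rw [show (1:ℝ) + √1 = 2 by rw [Real.sqrt_one]; norm_num] at this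
      exact this
    exact (Real.continuousAt_log (by norm_num)).tendsto.comp this
  apply h1.congr'
  filter_upwards [eventually_gt_atTop (0:ℝ)] with τ hτ
  rw [Real.arsinh]
  rw [show τ + √(1 + τ^2) = τ * (1 + √(τ⁻¹^2 + 1)) by
    have : √(1 + τ^2) = τ * √(τ⁻¹^2 + 1) := by
      rw [← Real.sqrt_sq hτ.le, ← Real.sqrt_mul (by positivity)]
      congr 1
      field_simp
      rw [Real.sq_sqrt (by positivity)]
    rw [this]; ring]
  rw [Real.log_mul hτ.ne' (by positivity)]
  ring

lemma base2 : Tendsto (fun τ : ℝ => (∫ r in (0:ℝ)..τ, ff 2 r) - Real.log τ)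
    atTop (nhds 0) := by
  have hint : ∀ τ : ℝ, (∫ r in (0:ℝ)..τ, ff 2 r) = (1/2) * Real.log (1 + τ^2) := by
    intro τ
    have hder : ∀ r : ℝ, HasDerivAt (fun t : ℝ => (1/2) * Real.log (1 + t^2)) (ff 2 r) r := by
      intro r
      have h1 : HasDerivAt (fun t : ℝ => 1 + t^2) (2*r) r := by
        simpa using ((hasDerivAt_pow 2 r).const_add 1)
      have h2 := (h1.log (by positivity)).const_mul (1/2 : ℝ)
      refine h2.congr_deriv ?_
      simp only [ff]
      rw [show (-((2:ℕ):ℝ)/2) = (-1 : ℝ) by norm_num, Real.rpow_neg_one]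
      field_simp
      norm_num
    rw [intervalIntegral.integral_eq_sub_of_hasDerivAt (fun r _ => hder r)
      ((continuous_ff 2).intervalIntegrable 0 τ)]
    norm_num
  simp only [hint]
  have h1 : Tendsto (fun τ : ℝ => (1/2) * Real.log (τ⁻¹^2 + 1)) atTop (nhds 0) := by
    have h0 : Tendsto (fun τ : ℝ => τ⁻¹ ^ 2 + 1) atTop (nhds 1) := by
      have := (tendsto_inv_atTop_zero (𝕜 := ℝ)).pow 2
      simpa using this.add tendsto_const_nhds
    have := ((Real.continuousAt_log (by norm_num : (1:ℝ) ≠ 0)).tendsto.comp h0).const_mul (1/2:ℝ)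
    simpa using this
  apply h1.congr'
  filter_upwards [eventually_gt_atTop (0:ℝ)] with τ hτ
  have : Real.log (τ⁻¹^2 + 1) = Real.log (1 + τ^2) - 2 * Real.log τ := by
    rw [show τ⁻¹^2 + 1 = (1 + τ^2) / τ^2 by field_simp,
      Real.log_div (by positivity) (by positivity), Real.log_pow]
    push_cast; ring
  rw [this]; ring

lemma gg_tendsto (d : ℕ) (hd : 1 ≤ d) :
    Tendsto (fun τ : ℝ => ∫ r in (0:ℝ)..τ, gg d r) atTop (nhds (1 / d)) := by
  set G : ℝ → ℝ := fun r => (d:ℝ)⁻¹ * (r ^ d * (1 + r^2) ^ (-(d:ℝ)/2)) with hG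
  have hder : ∀ r : ℝ, HasDerivAt G (gg d r) r := by
    intro r
    have hpos : (0:ℝ) < 1 + r^2 := by positivity
    have h1 : HasDerivAt (fun t : ℝ => t ^ d) ((d:ℝ) * r ^ (d-1)) r := hasDerivAt_pow d r
    have h0 : HasDerivAt (fun t : ℝ => 1 + t^2) (2*r) r := by
      simpa using ((hasDerivAt_pow 2 r).const_add 1)
    have h2 : HasDerivAt (fun t : ℝ => (1 + t^2) ^ (-(d:ℝ)/2))
        ((2*r) * (-(d:ℝ)/2) * (1 + r^2) ^ (-(d:ℝ)/2 - 1)) r :=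
      h0.rpow_const (Or.inl hpos.ne')
    have h3 := ((h1.mul h2).const_mul ((d:ℝ)⁻¹))
    refine h3.congr_deriv ?_
    have hd' : (d:ℝ) ≠ 0 := by positivity
    have e1 : (1 + r^2) ^ (-(d:ℝ)/2 - 1) = (1 + r^2) ^ (-(d:ℝ)/2) / (1 + r^2) := by
      rw [Real.rpow_sub hpos, Real.rpow_one]
    have e2 : (1 + r^2) ^ (-((d:ℝ)+2)/2) = (1 + r^2) ^ (-(d:ℝ)/2) / (1 + r^2) := by
      rw [show -((d:ℝ)+2)/2 = -(d:ℝ)/2 - 1 by ring, Real.rpow_sub hpos, Real.rpow_one]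
    have e3 : r ^ d = r ^ (d-1) * r := by
      conv_lhs => rw [show d = (d - 1) + 1 by omega]
      rw [pow_succ]
    rw [gg, e1, e2, e3]
    field_simp
    ring
  have hint : ∀ τ : ℝ, (∫ r in (0:ℝ)..τ, gg d r) = G τ := by
    intro τ
    rw [intervalIntegral.integral_eq_sub_of_hasDerivAt (fun r _ => hder r)
      ((continuous_gg d).intervalIntegrable 0 τ)]
    have : G 0 = 0 := by
      simp [hG, zero_pow (by omega : d ≠ 0)]
    rw [this, sub_zero]
  simp only [hint]
  have hlim : Tendsto (fun τ : ℝ => (d:ℝ)⁻¹ * ((τ⁻¹^2 + 1)⁻¹) ^ ((d:ℝ)/2)) atTop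
      (nhds (1 / d)) := by
    have h0 : Tendsto (fun τ : ℝ => (τ⁻¹ ^ 2 + 1)⁻¹) atTop (nhds 1) := by
      have : Tendsto (fun τ : ℝ => τ⁻¹ ^ 2 + 1) atTop (nhds 1) := by
        have := (tendsto_inv_atTop_zero (𝕜 := ℝ)).pow 2
        simpa using this.add tendsto_const_nhds
      simpa using this.inv₀ (by norm_num)
    have h1 : Tendsto (fun τ : ℝ => ((τ⁻¹ ^ 2 + 1)⁻¹) ^ ((d:ℝ)/2)) atTop (nhds 1) := by
      have hc := (Real.continuousAt_rpow_const 1 ((d:ℝ)/2) (Or.inl one_ne_zero)).tendsto.comp h0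
      simpa [Function.comp_def] using hc
    have := h1.const_mul ((d:ℝ)⁻¹)
    simpa [one_div] using this
  apply hlim.congr'
  filter_upwards [eventually_gt_atTop (0:ℝ)] with τ hτ
  have hτ2 : (0:ℝ) < τ^2 := by positivity
  have hpos : (0:ℝ) < 1 + τ^2 := by positivity
  have e1 : (τ^2) ^ ((d:ℝ)/2) = τ ^ d := by
    rw [← Real.rpow_natCast τ 2, ← Real.rpow_mul hτ.le,
      show ((2:ℕ):ℝ) * ((d:ℝ)/2) = ((d:ℕ):ℝ) by push_cast; ring, Real.rpow_natCast]
  have e2 : (1 + τ^2) ^ (-(d:ℝ)/2) = ((1 + τ^2)⁻¹) ^ ((d:ℝ)/2) := by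
    rw [show -(d:ℝ)/2 = -((d:ℝ)/2) by ring, Real.rpow_neg hpos.le,
      ← Real.inv_rpow hpos.le]
  have e3 : (τ⁻¹^2 + 1)⁻¹ = τ^2 * (1 + τ^2)⁻¹ := by
    have h1 : τ ≠ 0 := hτ.ne'
    field_simp
  show _ = (d:ℝ)⁻¹ * (τ ^ d * (1 + τ^2) ^ (-(d:ℝ)/2))
  rw [e3, Real.mul_rpow hτ2.le (by positivity), e1, ← e2]

lemma step (d : ℕ) (hd : 1 ≤ d) {c : ℝ}
    (ih : Tendsto (fun τ : ℝ => (∫ r in (0:ℝ)..τ, ff d r) - Real.log τ) atTop (nhds c)) :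
    Tendsto (fun τ : ℝ => (∫ r in (0:ℝ)..τ, ff (d+2) r) - Real.log τ) atTop
      (nhds (c - 1/d)) := by
  have key : ∀ r : ℝ, ff (d+2) r = ff d r - gg d r := by
    intro r
    have hpos : (0:ℝ) < 1 + r^2 := by positivity
    simp only [ff, gg]
    have e2 : (1 + r^2) ^ (-(((d+2:ℕ)):ℝ)/2) = (1 + r^2) ^ (-(d:ℝ)/2) / (1 + r^2) := by
      rw [show -(((d+2:ℕ)):ℝ)/2 = -(d:ℝ)/2 - 1 by push_cast; ring,
        Real.rpow_sub hpos, Real.rpow_one]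
    have e2' : (1 + r^2) ^ (-((d:ℝ)+2)/2) = (1 + r^2) ^ (-(d:ℝ)/2) / (1 + r^2) := by
      rw [show -((d:ℝ)+2)/2 = -(d:ℝ)/2 - 1 by ring, Real.rpow_sub hpos, Real.rpow_one]
    have e3 : r ^ (d + 2 - 1) = r ^ (d-1) * r^2 := by
      rw [← pow_add]; congr 1; omega
    rw [e2, e2', e3]
    field_simp
    ring
  have hsplit : ∀ τ : ℝ, (∫ r in (0:ℝ)..τ, ff (d+2) r)
      = (∫ r in (0:ℝ)..τ, ff d r) - ∫ r in (0:ℝ)..τ, gg d r := by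
    intro τ
    rw [← intervalIntegral.integral_sub ((continuous_ff d).intervalIntegrable 0 τ)
      ((continuous_gg d).intervalIntegrable 0 τ)]
    exact intervalIntegral.integral_congr (fun r _ => key r)
  have h := ih.sub (gg_tendsto d hd)
  apply h.congr
  intro τ
  rw [hsplit τ]; ring

lemma main : ∀ d : ℕ, 1 ≤ d →
    Tendsto (fun τ : ℝ => (∫ r in (0:ℝ)..τ, ff d r) - Real.log τ) atTop
      (nhds (-(1/2) * (digamma ((d:ℝ)/2) + Real.eulerMascheroniConstant)))
  | 0, h => absurd h (by norm_num)
  | 1, _ => by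
      have h := base1
      convert h using 2
      rw [show ((1:ℕ):ℝ)/2 = 1/2 by norm_num, digamma_half]; ring
  | 2, _ => by
      have h := base2
      convert h using 2
      rw [show ((2:ℕ):ℝ)/2 = 1 by norm_num, digamma_one]; ring
  | (n+3), _ => by
      have ih := main (n+1) (by omega)
      have hs := step (n+1) (by omega) ih
      convert hs using 2
      have h1 : (0:ℝ) < ((n+1:ℕ):ℝ)/2 := by positivity
      have h2 := digamma_add_one h1
      rw [show (((n+3:ℕ)):ℝ)/2 = ((n+1:ℕ):ℝ)/2 + 1 by push_cast; ring, h2]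
      have h3 : ((n+1:ℕ):ℝ) ≠ 0 := by positivity
      push_cast at h3 ⊢
      field_simp
      ring

end Integrals

/-- `lim_{τ→∞} [ ∫₀^τ (1+r²)^{-d/2} r^{d-1} dr − log τ ] = −(1/2)(Ψ(d/2) + γ)`. -/
theorem stmt10 (d : ℕ) (hd : 1 ≤ d) :
    Tendsto (fun τ : ℝ =>
        (∫ r in (0:ℝ)..τ, (1 + r ^ 2) ^ (-(d : ℝ) / 2) * r ^ ((d : ℝ) - 1)) - Real.log τ)
      atTop
      (nhds (-(1 / 2) * (digamma ((d : ℝ) / 2) + Real.eulerMascheroniConstant))) := by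
  have hfun : ∀ r : ℝ, (1 + r ^ 2) ^ (-(d : ℝ) / 2) * r ^ ((d : ℝ) - 1) = ff d r := by
    intro r
    simp only [ff]
    congr 1
    rw [show (d:ℝ) - 1 = ((d - 1 : ℕ) : ℝ) by rw [Nat.cast_sub hd]; norm_num,
      Real.rpow_natCast]
  simp only [hfun]
  exact main d hd
end
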